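/- Let d ≥ 1 be an integer, σ > 0 and ε > 0 real. Let β, γ be multi-indices with |β+γ| = 6 and Δ(β+γ) ≤ 1, let j ∈ supp(β+γ), and let q : ℤ^d → ℂ satisfy sup_{a∈ℤ^d} |q_a|(1+⟨a⟩)^σ ≤ 2ε. Then |q^β conj(q)^γ| ≤ (2ε)^6 · (1+⟨j⟩)^{−σ} · (max(⟨j⟩, 2))^{−5σ}. -/

import Mathlib

open scoped BigOperators

noncomputable section

/-- ℓ¹ norm (as a natural number) of a lattice point in `ℤ^d`. -/
def norm1 {d : ℕ} (j : Fin d → ℤ) : ℕ := ∑ i, (j i).natAbs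

/-- `⟨j⟩ = max(|j|₁, 1)`. -/
def jbra {d : ℕ} (j : Fin d → ℤ) : ℕ := max (norm1 j) 1

/-- ℓ¹-diameter of a finite set of lattice points. -/
def diam1 {d : ℕ} (S : Finset (Fin d → ℤ)) : ℕ :=
  (S ×ˢ S).sup fun p => norm1 (p.1 - p.2)

/-- Multi-indices on `ℤ^d`: finitely supported functions to `ℕ`. -/
abbrev MIdx (d : ℕ) := (Fin d → ℤ) →₀ ℕ

/-- total weight `|m| = ∑ m_j` of a multi-index. -/
def wt {d : ℕ} (m : MIdx d) : ℕ := m.sum fun _ n => n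

/-- `Δ(m)`: ℓ¹-diameter of the support of a multi-index. -/
def mdiam {d : ℕ} (m : MIdx d) : ℕ := diam1 m.support

/-- the monomial `q^β * conj(q)^γ`. -/
def mono {d : ℕ} (q : (Fin d → ℤ) → ℂ) (β γ : MIdx d) : ℂ :=
  (β.prod fun a n => q a ^ n) * (γ.prod fun a n => (starRingEnd ℂ) (q a) ^ n)

/-- Index set of short-range degree-6 monomials. -/
abbrev PairIdx (d : ℕ) :=
  {p : MIdx d × MIdx d // wt (p.1 + p.2) = 6 ∧ mdiam (p.1 + p.2) ≤ 1}


lemma norm1_triangle {d : ℕ} (x y : Fin d → ℤ) : norm1 (x + y) ≤ norm1 x + norm1 y := by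
  rw [norm1, norm1, norm1, ← Finset.sum_add_distrib]
  exact Finset.sum_le_sum fun i _ => Int.natAbs_add_le _ _

/-- estimate (5.5) of the paper.
If `|β+γ| = 6`, `Δ(β+γ) ≤ 1`, `j ∈ supp(β+γ)` and `⫴q⫴_σ ≤ 2ε`, then
`|q^β conj(q)^γ| ≤ (2ε)^6 (1+⟨j⟩)^{-σ} (max(⟨j⟩,2))^{-5σ}`. -/
theorem monomial_decay_bound
    (d : ℕ) (hd : 1 ≤ d) (σ ε : ℝ) (hσ : 0 < σ) (hε : 0 < ε)
    (β γ : MIdx d) (h6 : wt (β + γ) = 6) (h1 : mdiam (β + γ) ≤ 1)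
    (j : Fin d → ℤ) (hj : j ∈ (β + γ).support)
    (q : (Fin d → ℤ) → ℂ)
    (hq : ∀ a, ‖q a‖ * (1 + (jbra a : ℝ)) ^ σ ≤ 2 * ε) :
    ‖mono q β γ‖
      ≤ (2 * ε) ^ 6 * (1 + (jbra j : ℝ)) ^ (-σ) *
          ((max (jbra j) 2 : ℕ) : ℝ) ^ (-(5 * σ)) := by
  classical
  set m := β + γ with hm
  set c : (Fin d → ℤ) → ℝ := fun a => ‖q a‖ with hc
  have hcnn : ∀ a, 0 ≤ c a := fun a => norm_nonneg _
  -- step 1: |mono| = m.prod (c ^ ·)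
  have habs : ‖mono q β γ‖ = m.prod fun a n => c a ^ n := by
    rw [hm, Finsupp.prod_add_index (by simp) (fun a _ x y => pow_add _ _ _)]
    rw [mono, norm_mul, Finsupp.prod, Finsupp.prod, norm_prod, norm_prod]
    simp [Finsupp.prod, hc, norm_pow]
  -- basic quantities
  set Jr : ℝ := 1 + (jbra j : ℝ) with hJr
  set Mr : ℝ := ((max (jbra j) 2 : ℕ) : ℝ) with hMr
  have hM2 : (2:ℝ) ≤ Mr := by
    rw [hMr]; exact_mod_cast le_max_right (jbra j) 2
  have hMpos : (0:ℝ) < Mr := by linarith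
  have hjb1 : 1 ≤ jbra j := le_max_right _ 1
  have hJM : Mr ≤ Jr := by
    rw [hMr, hJr]
    have : max (jbra j) 2 ≤ jbra j + 1 := max_le (Nat.le_succ _) (by omega)
    calc ((max (jbra j) 2 : ℕ) : ℝ) ≤ ((jbra j + 1 : ℕ) : ℝ) := by exact_mod_cast this
      _ = 1 + (jbra j : ℝ) := by push_cast; ring
  have hJpos : (0:ℝ) < Jr := lt_of_lt_of_le hMpos hJM
  -- each a in support is close to j
  have hnear : ∀ a ∈ m.support, Mr ≤ 1 + (jbra a : ℝ) := by
    intro a ha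
    have hpair : ((a, j) : _ × _) ∈ m.support ×ˢ m.support := Finset.mem_product.mpr ⟨ha, hj⟩
    have h1' : mdiam m ≤ 1 := h1
    unfold mdiam diam1 at h1'
    have hd1 : norm1 (a - j) ≤ 1 :=
      le_trans (Finset.le_sup (f := fun p => norm1 (p.1 - p.2)) hpair) h1'
    have htri : norm1 j ≤ norm1 a + 1 := by
      have := norm1_triangle (j - a) a
      simp only [sub_add_cancel] at this
      have heq : norm1 (j - a) = norm1 (a - j) := by
        unfold norm1
        refine Finset.sum_congr rfl fun i _ => ?_
        have : (j - a) i = -((a - j) i) := by simp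
        rw [this, Int.natAbs_neg]
      omega
    have hkey : max (jbra j) 2 ≤ 1 + jbra a := by
      have h1a : 1 ≤ jbra a := le_max_right _ 1
      have : jbra j ≤ jbra a + 1 := by
        unfold jbra at *
        have : norm1 a ≤ max (norm1 a) 1 := le_max_left _ _
        omega
      omega
    rw [hMr]
    calc ((max (jbra j) 2 : ℕ) : ℝ) ≤ ((1 + jbra a : ℕ) : ℝ) := by exact_mod_cast hkey
      _ = 1 + (jbra a : ℝ) := by push_cast; ring
  -- pointwise bounds
  set K : ℝ := 2 * ε * Mr ^ (-σ) with hK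
  set L : ℝ := 2 * ε * Jr ^ (-σ) with hL
  have hKnn : 0 ≤ K := by positivity
  have hcb : ∀ a, c a ≤ 2 * ε * (1 + (jbra a : ℝ)) ^ (-σ) := by
    intro a
    have hpos : (0:ℝ) < (1 + (jbra a : ℝ)) ^ σ := by positivity
    have := hq a
    rw [Real.rpow_neg (by positivity), ← div_eq_mul_inv, le_div_iff₀ hpos]
    exact this
  have hcK : ∀ a ∈ m.support, c a ≤ K := by
    intro a ha
    refine le_trans (hcb a) ?_
    rw [hK]
    have := Real.rpow_le_rpow_of_nonpos hMpos (hnear a ha) (neg_nonpos.mpr hσ.le)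
    nlinarith
  have hcL : c j ≤ L := by
    refine le_trans (hcb j) ?_
    rw [hL, hJr]
  have hLK : L ≤ K := by
    rw [hL, hK]
    have := Real.rpow_le_rpow_of_nonpos hMpos hJM (neg_nonpos.mpr hσ.le)
    nlinarith
  have hLnn : 0 ≤ L := by positivity
  -- sum of exponents
  have hsum : ∑ a ∈ m.support, m a = 6 := h6
  have hmj : 1 ≤ m j := Nat.one_le_iff_ne_zero.mpr (Finsupp.mem_support_iff.mp hj)
  have hsplit : m j + ∑ a ∈ m.support.erase j, m a = 6 := by
    rw [← Finset.add_sum_erase _ _ hj] at hsum; exact hsum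
  -- product bound
  have hprod : m.prod (fun a n => c a ^ n) ≤ L * K ^ 5 := by
    rw [Finsupp.prod, ← Finset.mul_prod_erase _ _ hj]
    have hb1 : c j ^ m j ≤ L * K ^ (m j - 1) := by
      have : c j ^ m j = c j * c j ^ (m j - 1) := by
        rw [← pow_succ']
        congr 1; omega
      rw [this]
      exact mul_le_mul hcL (pow_le_pow_left₀ (hcnn j) (le_trans hcL hLK) _) (pow_nonneg (hcnn j) _) hLnn
    have hb2 : ∏ a ∈ m.support.erase j, c a ^ m a ≤ K ^ (∑ a ∈ m.support.erase j, m a) := by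
      rw [← Finset.prod_pow_eq_pow_sum]
      exact Finset.prod_le_prod (fun a _ => pow_nonneg (hcnn a) _)
        (fun a ha => pow_le_pow_left₀ (hcnn a) (hcK a (Finset.mem_of_mem_erase ha)) _)
    calc c j ^ m j * ∏ a ∈ m.support.erase j, c a ^ m a
        ≤ (L * K ^ (m j - 1)) * K ^ (∑ a ∈ m.support.erase j, m a) := by
          exact mul_le_mul hb1 hb2 (Finset.prod_nonneg fun a _ => pow_nonneg (hcnn a) _) (by positivity)
      _ = L * K ^ (m j - 1 + ∑ a ∈ m.support.erase j, m a) := by rw [mul_assoc, pow_add]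
      _ = L * K ^ 5 := by congr 2; omega
  -- finish
  rw [habs]
  refine le_trans hprod (le_of_eq ?_)
  rw [hL, hK]
  have h5 : (Mr ^ (-σ)) ^ (5:ℕ) = Mr ^ (-(5*σ)) := by
    rw [← Real.rpow_natCast (Mr ^ (-σ)) 5, ← Real.rpow_mul hMpos.le]
    norm_num; ring_nf
  rw [mul_pow, mul_pow, h5]
  ring
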